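/- Fix a positive integer n and a real number r with √2/2 < r < 1, and define g(d) = 1 − [(1 − r^d)(1 − (n − 1)(1 − r²)^{d/2}/2)]^n for positive integers d. Then g(d) is asymptotically equivalent to n·r^d as d → ∞, i.e., g(d)/(n·r^d) → 1 as d → ∞. -/

import Mathlib

open Filter

/-- **Statement 3, case 1.** For a fixed positive integer `n` and fixed
`√2/2 < r < 1`, the Gorban–Burton–Tyukin failure-probability bound
`g(d) = 1 - [(1 - r^d)(1 - (n-1)(1-r²)^{d/2}/2)]^n` satisfies `g(d) ~ n·r^d`
as `d → ∞`, i.e. `g(d)/(n·r^d) → 1`. -/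
theorem fisher_failure_bound_asymp_large_r
    (n : ℕ) (hn : 0 < n) (r : ℝ) (hr0 : Real.sqrt 2 / 2 < r) (hr1 : r < 1) :
    Tendsto (fun d : ℕ =>
        (1 - ((1 - r ^ d) * (1 - ((n : ℝ) - 1) * (1 - r ^ 2) ^ ((d : ℝ) / 2) / 2)) ^ n) /
          ((n : ℝ) * r ^ d))
      atTop (nhds 1) := by
  have h2 : (0:ℝ) < Real.sqrt 2 / 2 := by positivity
  have hrpos : 0 < r := h2.trans hr0
  have hsq : (Real.sqrt 2 / 2) ^ 2 = 1 / 2 := by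
    rw [div_pow, Real.sq_sqrt (by norm_num : (2:ℝ) ≥ 0)]; norm_num
  have hr2 : 1 / 2 < r ^ 2 := by
    have := pow_lt_pow_left₀ hr0 h2.le (n := 2) (by norm_num)
    linarith [hsq ▸ this]
  have hr2' : r ^ 2 < 1 := by nlinarith
  set s : ℝ := Real.sqrt (1 - r ^ 2) with hs_def
  have hs0 : 0 ≤ s := Real.sqrt_nonneg _
  have hs2 : s ^ 2 = 1 - r ^ 2 := Real.sq_sqrt (by linarith)
  have hsr : s < r := by nlinarith
  have hs1 : s < 1 := hsr.trans hr1
  have hn1 : (0:ℝ) ≤ (n:ℝ) - 1 := by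
    have : (1:ℝ) ≤ (n:ℝ) := by exact_mod_cast hn
    linarith
  have hn' : (n:ℝ) ≠ 0 := Nat.cast_ne_zero.mpr hn.ne'
  -- rewrite the rpow as a natural power of s
  have hkey : ∀ d : ℕ, (1 - r ^ 2) ^ ((d:ℝ) / 2) = s ^ d := by
    intro d
    rw [show (d:ℝ) / 2 = (1/2) * (d:ℝ) by ring,
      Real.rpow_mul (by linarith : (0:ℝ) ≤ 1 - r ^ 2), ← Real.sqrt_eq_rpow,
      Real.rpow_natCast]
  set u : ℕ → ℝ := fun d => r ^ d + ((n:ℝ) - 1) * s ^ d / 2 * (1 - r ^ d) with hu_def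
  have hrd_pos : ∀ d : ℕ, 0 < r ^ d := fun d => pow_pos hrpos d
  have hrd_lt1 : ∀ d : ℕ, r ^ d ≤ 1 := fun d => pow_le_one₀ hrpos.le hr1.le
  have hu_pos : ∀ d : ℕ, 0 < u d := by
    intro d
    have h1 := hrd_pos d
    have h2 := hrd_lt1 d
    have h3 : 0 ≤ ((n:ℝ) - 1) * s ^ d / 2 * (1 - r ^ d) := by
      apply mul_nonneg _ (by linarith)
      positivity
    simp only [hu_def]
    linarith
  have hA : Tendsto (fun d : ℕ => r ^ d) atTop (nhds 0) :=
    tendsto_pow_atTop_nhds_zero_of_lt_one hrpos.le hr1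
  have hS : Tendsto (fun d : ℕ => s ^ d) atTop (nhds 0) :=
    tendsto_pow_atTop_nhds_zero_of_lt_one hs0 hs1
  have hU : Tendsto u atTop (nhds 0) := by
    have h := hA.add ((((tendsto_const_nhds (x := (n:ℝ) - 1)).mul hS).div_const 2).mul
      ((tendsto_const_nhds (x := (1:ℝ))).sub hA))
    simpa using h
  -- derivative of x ↦ 1 - (1-x)^n at 0 is n
  have hderiv : HasDerivAt (fun x : ℝ => 1 - (1 - x) ^ n) (n : ℝ) 0 := by
    have h1 : HasDerivAt (fun x : ℝ => 1 - x) (-1) 0 := (hasDerivAt_id 0).const_sub 1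
    have h2 := h1.pow n
    have h3 : HasDerivAt (fun x : ℝ => 1 - (1 - x) ^ n) (-((n:ℝ) * (1 - 0) ^ (n - 1) * -1)) 0 :=
      h2.const_sub 1
    convert h3 using 1
    simp
  have hslope : Tendsto (fun x : ℝ => (1 - (1 - x) ^ n) / x) (nhdsWithin 0 {(0:ℝ)}ᶜ)
      (nhds (n : ℝ)) := by
    have h := hasDerivAt_iff_tendsto_slope.mp hderiv
    refine h.congr fun x => ?_
    simp [slope_fun_def, div_eq_inv_mul]
  have hU' : Tendsto u atTop (nhdsWithin 0 {(0:ℝ)}ᶜ) :=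
    tendsto_nhdsWithin_of_tendsto_nhds_of_eventually_within _ hU
      (Eventually.of_forall fun d => (hu_pos d).ne')
  have hcomp : Tendsto (fun d => (1 - (1 - u d) ^ n) / u d) atTop (nhds (n : ℝ)) :=
    hslope.comp hU'
  -- u d / r^d → 1
  have hQ : Tendsto (fun d => u d / r ^ d) atTop (nhds 1) := by
    have hsr' : Tendsto (fun d : ℕ => (s / r) ^ d) atTop (nhds 0) :=
      tendsto_pow_atTop_nhds_zero_of_lt_one (div_nonneg hs0 hrpos.le)
        ((div_lt_one hrpos).mpr hsr)
    have h : Tendsto (fun d : ℕ => 1 + ((n:ℝ) - 1) / 2 * (s / r) ^ d * (1 - r ^ d)) atTop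
        (nhds (1 + ((n:ℝ) - 1) / 2 * 0 * (1 - 0))) :=
      tendsto_const_nhds.add ((((tendsto_const_nhds (x := ((n:ℝ) - 1) / 2)).mul hsr')).mul
        ((tendsto_const_nhds (x := (1:ℝ))).sub hA))
    have h' : Tendsto (fun d : ℕ => 1 + ((n:ℝ) - 1) / 2 * (s / r) ^ d * (1 - r ^ d)) atTop
        (nhds 1) := by simpa using h
    refine h'.congr fun d => ?_
    have hrd := (hrd_pos d).ne'
    simp only [hu_def, div_pow]
    field_simp
  have hmain : Tendsto (fun d => (1 - (1 - u d) ^ n) / u d * (u d / r ^ d) * ((n:ℝ))⁻¹)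
      atTop (nhds ((n:ℝ) * 1 * ((n:ℝ))⁻¹)) :=
    (hcomp.mul hQ).mul tendsto_const_nhds
  have hlim : (n:ℝ) * 1 * ((n:ℝ))⁻¹ = 1 := by field_simp
  rw [hlim] at hmain
  refine hmain.congr fun d => ?_
  have hud := (hu_pos d).ne'
  have hrd := (hrd_pos d).ne'
  rw [hkey d]
  have hfactor : (1 - r ^ d) * (1 - ((n:ℝ) - 1) * s ^ d / 2) = 1 - u d := by
    simp only [hu_def]; ring
  rw [hfactor]
  have hX : (1 - (1 - u d) ^ n) / u d * (u d / r ^ d) = (1 - (1 - u d) ^ n) / r ^ d := by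
    rw [div_mul_div_comm, mul_comm ((1:ℝ) - (1 - u d) ^ n) (u d), mul_div_mul_left _ _ hud]
  rw [hX, ← div_eq_mul_inv, div_div, mul_comm (r ^ d) ((n:ℝ))]
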